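/- arXiv:2012.13207 — 4 statements merged into one kernel-verified Lean document; each statement's English description precedes it below -/
import Mathlib

section
/- Let φ ∈ H^∞(𝔻) be inner. Then the operator V = [[φ(0), P_ℂ|_{Q_φ}],[M_z* M_φ|_ℂ, M_z*|_{Q_φ}]] on ℂ ⊕ Q_φ is unitary. -/
open ContinuousLinearMap

local notation "⟪" x ", " y "⟫" => @inner ℂ _ _ x y

private lemma pyth_aux {H : Type*} [NormedAddCommGroup H] [InnerProductSpace ℂ H]
    (x y : H) (h : ⟪x, y⟫ = 0) : ‖x + y‖ ^ 2 = ‖x‖ ^ 2 + ‖y‖ ^ 2 := by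
  rw [sq, sq, sq]
  exact norm_add_sq_eq_norm_sq_add_norm_sq_of_inner_eq_zero x y h

set_option maxHeartbeats 1600000 in
/-- For an inner function `φ` on `𝔻`, the colligation
`V = [[φ(0), P_ℂ|_{Q_φ}],[M_z* M_φ|_ℂ, M_z*|_{Q_φ}]]` on `ℂ ⊕ Q_φ` is unitary.
Abstract model of the Hardy space: `H` Hilbert, `one` the constant `1` (a unit vector),
`Mz` the shift: an isometry with `Mz* one = 0`, `Mz Mz* + P_ℂ = I` and `{Mz^m one}` total;
`Mφ` the isometric multiplication by `φ = Mφ one`, commuting with `Mz`; `Q = (ran M_φ)ᗮ`,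
`T = M_z*|_Q`, `qφ = M_z* φ ∈ Q` and `φ(0) = ⟪1, φ⟫`.  Unitarity of
`V (c, q) = (φ(0) c + ⟪1, q⟫, c • qφ + T q)` is expressed as: `V` preserves the norm of the
Hilbert direct sum `ℂ ⊕ Q` and is bijective. -/
theorem stmt_3 {H : Type*} [NormedAddCommGroup H] [InnerProductSpace ℂ H] [CompleteSpace H]
    (Mz Mφ : H →L[ℂ] H) (one : H) (hone : ‖one‖ = 1)
    (hMz : ∀ x, ‖Mz x‖ = ‖x‖) (hMφ : ∀ x, ‖Mφ x‖ = ‖x‖)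
    (hcomm : Mz ∘L Mφ = Mφ ∘L Mz)
    (hzero : adjoint Mz one = 0)
    (hshift : ∀ x : H, Mz ((adjoint Mz) x) + (inner ℂ one x : ℂ) • one = x)
    (hcyclic :
      (Submodule.span ℂ (Set.range fun m : ℕ => (Mz ^ m) one)).topologicalClosure = ⊤)
    (Q : Submodule ℂ H) (hQ : Q = (LinearMap.range (Mφ : H →ₗ[ℂ] H))ᗮ)
    (T : Q →L[ℂ] Q) (hT : ∀ x : Q, (T x : H) = adjoint Mz (x : H))
    (qφ : Q) (hqφ : (qφ : H) = adjoint Mz (Mφ one)) :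
    (∀ (c : ℂ) (q : Q),
      ‖(inner ℂ one (Mφ one) : ℂ) * c + (inner ℂ one (q : H) : ℂ)‖ ^ 2 + ‖c • qφ + T q‖ ^ 2 =
        ‖c‖ ^ 2 + ‖q‖ ^ 2) ∧
    Function.Bijective (fun p : ℂ × Q =>
      ((inner ℂ one (Mφ one) : ℂ) * p.1 + (inner ℂ one ((p.2 : Q) : H) : ℂ),
        p.1 • qφ + T p.2)) := by
  -- basic inner-product facts
  have hMzi : ∀ x y : H, ⟪Mz x, Mz y⟫ = ⟪x, y⟫ := by
    intro x y; exact (LinearMap.norm_map_iff_inner_map_map Mz).mp hMz x y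
  have hMφi : ∀ x y : H, ⟪Mφ x, Mφ y⟫ = ⟪x, y⟫ := by
    intro x y; exact (LinearMap.norm_map_iff_inner_map_map Mφ).mp hMφ x y
  have hMzadj : ∀ x : H, adjoint Mz (Mz x) = x := by
    intro x
    refine ext_inner_right ℂ fun y => ?_
    rw [adjoint_inner_left, hMzi]
  have honeMz : ∀ y : H, ⟪one, Mz y⟫ = 0 := by
    intro y
    rw [← adjoint_inner_left, hzero, inner_zero_left]
  have hone1 : ⟪one, one⟫ = (1 : ℂ) := by
    rw [inner_self_eq_norm_sq_to_K, hone]; norm_num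
  -- q ∈ Q is orthogonal to range of Mφ
  have hQorth : ∀ x : H, ∀ y ∈ Q, ⟪y, Mφ x⟫ = 0 := by
    intro x y hy
    rw [hQ] at hy
    exact (Submodule.mem_orthogonal' _ y).mp hy (Mφ x) ⟨x, rfl⟩
  -- shift-commutation identity: Mz* (Mφ x) = Mφ (Mz* x) + ⟪one, x⟫ • Mz* φ
  have hkey : ∀ x : H,
      adjoint Mz (Mφ x) = Mφ (adjoint Mz x) + (⟪one, x⟫ : ℂ) • adjoint Mz (Mφ one) := by
    intro x
    conv_lhs => rw [← hshift x]
    have h1 : Mφ (Mz (adjoint Mz x)) = Mz (Mφ (adjoint Mz x)) := by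
      have := congrArg (fun A : H →L[ℂ] H => A (adjoint Mz x)) hcomm
      simpa using this.symm
    rw [map_add, map_add, map_smul, map_smul, h1, hMzadj]
  -- ⟪one, Mφ x⟫ = ⟪one, φ⟫ * ⟪one, x⟫
  have hB : ∀ x : H, ⟪one, Mφ x⟫ = ⟪one, Mφ one⟫ * ⟪one, x⟫ := by
    intro x
    conv_lhs => rw [← hshift x]
    rw [map_add, map_smul, inner_add_right, inner_smul_right]
    have h1 : Mφ (Mz (adjoint Mz x)) = Mz (Mφ (adjoint Mz x)) := by
      have := congrArg (fun A : H →L[ℂ] H => A (adjoint Mz x)) hcomm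
      simpa using this.symm
    rw [h1, honeMz, mul_comm]
    ring
  -- ⟪Mz y, Mφ x⟫ = ⟪y, qφ⟫ * ⟪one, x⟫ for y ∈ Q
  have hC : ∀ x : H, ∀ y ∈ Q, ⟪Mz y, Mφ x⟫ = ⟪y, (qφ : H)⟫ * ⟪one, x⟫ := by
    intro x y hy
    rw [← adjoint_inner_right, hkey, inner_add_right, inner_smul_right,
      hQorth _ y hy, ← hqφ, mul_comm]
    ring
  -- norm identity
  have hnorm : ∀ (c : ℂ) (q : Q),
      ‖(⟪one, Mφ one⟫ : ℂ) * c + (⟪one, (q : H)⟫ : ℂ)‖ ^ 2 + ‖c • qφ + T q‖ ^ 2 =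
        ‖c‖ ^ 2 + ‖q‖ ^ 2 := by
    intro c q
    set x : H := c • Mφ one + (q : H) with hx
    have h1 : ⟪one, x⟫ = ⟪one, Mφ one⟫ * c + ⟪one, (q : H)⟫ := by
      rw [hx, inner_add_right, inner_smul_right, mul_comm]
    have h2 : ((c • qφ + T q : Q) : H) = adjoint Mz x := by
      push_cast
      rw [hT, hqφ, hx]
      simp only [map_add, map_smul]
    have hnq : ‖(q : H)‖ = ‖q‖ := rfl
    have h3 : ‖x‖ ^ 2 = ‖c‖ ^ 2 + ‖q‖ ^ 2 := by
      rw [hx, pyth_aux _ _ ?_]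
      · rw [norm_smul, hMφ, hone, mul_one, hnq]
      · rw [inner_smul_left, inner_eq_zero_symm.mpr (hQorth one _ q.2), mul_zero]
    have h4 : ‖x‖ ^ 2 = ‖adjoint Mz x‖ ^ 2 + ‖(⟪one, x⟫ : ℂ)‖ ^ 2 := by
      conv_lhs => rw [← hshift x]
      rw [pyth_aux _ _ ?_]
      · rw [hMz, norm_smul, hone, mul_one]
      · rw [inner_smul_right, inner_eq_zero_symm.mpr (honeMz _), mul_zero]
    have h5 : ‖c • qφ + T q‖ = ‖adjoint Mz x‖ := by
      rw [← h2]; rfl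
    rw [← h1, h5, ← h3, h4]; ring
  refine ⟨hnorm, ?_, ?_⟩
  · -- injectivity
    rintro ⟨d₁, r₁⟩ ⟨d₂, r₂⟩ hp
    have h1 : (⟪one, Mφ one⟫ : ℂ) * d₁ + ⟪one, (r₁ : H)⟫ =
        (⟪one, Mφ one⟫ : ℂ) * d₂ + ⟪one, (r₂ : H)⟫ := congrArg Prod.fst hp
    have h2 : d₁ • qφ + T r₁ = d₂ • qφ + T r₂ := congrArg Prod.snd hp
    have e1 : (⟪one, Mφ one⟫ : ℂ) * (d₁ - d₂) + ⟪one, ((r₁ - r₂ : Q) : H)⟫ = 0 := by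
      have hcoe : ((r₁ - r₂ : Q) : H) = (r₁ : H) - (r₂ : H) := rfl
      rw [hcoe, inner_sub_right]
      linear_combination h1
    have e2 : (d₁ - d₂) • qφ + T (r₁ - r₂) = 0 := by
      rw [map_sub, sub_smul,
        show d₁ • qφ - d₂ • qφ + (T r₁ - T r₂) = (d₁ • qφ + T r₁) - (d₂ • qφ + T r₂) by abel,
        h2, sub_self]
    have hn := hnorm (d₁ - d₂) (r₁ - r₂)
    rw [e1, e2, norm_zero, norm_zero] at hn
    have hcn : ‖d₁ - d₂‖ = 0 := by
      nlinarith [sq_nonneg ‖d₁ - d₂‖, sq_nonneg ‖r₁ - r₂‖, norm_nonneg (d₁ - d₂),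
        norm_nonneg (r₁ - r₂)]
    have hqn : ‖r₁ - r₂‖ = 0 := by
      nlinarith [sq_nonneg ‖d₁ - d₂‖, sq_nonneg ‖r₁ - r₂‖, norm_nonneg (d₁ - d₂),
        norm_nonneg (r₁ - r₂)]
    have hd : d₁ = d₂ := sub_eq_zero.mp (norm_eq_zero.mp hcn)
    have hr : r₁ = r₂ := sub_eq_zero.mp (norm_eq_zero.mp hqn)
    simp [hd, hr]
  · -- surjectivity
    rintro ⟨d, r⟩
    set φ₀ : ℂ := ⟪one, Mφ one⟫ with hφ₀
    set c : ℂ := d * (starRingEnd ℂ) φ₀ + ⟪(qφ : H), (r : H)⟫ with hc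
    set q' : H := d • one + Mz r - c • Mφ one with hq'
    have hq'mem : q' ∈ Q := by
      rw [hQ, Submodule.mem_orthogonal']
      rintro u ⟨x, rfl⟩
      show ⟪q', Mφ x⟫ = 0
      rw [hq', inner_sub_left, inner_add_left, inner_smul_left, inner_smul_left,
        hMφi, hB, hC x (r : H) r.2]
      have hconj : ⟪(r : H), (qφ : H)⟫ = (starRingEnd ℂ) ⟪(qφ : H), (r : H)⟫ :=
        (inner_conj_symm _ _).symm
      rw [hconj, hc]
      simp only [map_add, map_mul, starRingEnd_self_apply]
      ring
    refine ⟨(c, ⟨q', hq'mem⟩), ?_⟩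
    have hfst : φ₀ * c + ⟪one, q'⟫ = d := by
      rw [hq', inner_sub_right, inner_add_right, inner_smul_right, inner_smul_right,
        hone1, honeMz, hφ₀]
      ring
    have hsnd : c • qφ + T ⟨q', hq'mem⟩ = r := by
      apply Subtype.ext
      push_cast
      rw [hT, hqφ]
      show c • adjoint Mz (Mφ one) + adjoint Mz q' = (r : H)
      rw [hq', map_sub, map_add, map_smul, map_smul, hzero, hMzadj, smul_zero]
      abel
    exact Prod.ext hfst hsnd
end

section
/- There is no isometric colligation V = [[−t, B₁, B₂],[C₁, D₁, D₂],[C₂, 0, D₃]] on ℂ ⊕ H₁ ⊕ H₂ with D₁ ∈ C₀· whose transfer function equals φ_t(z₁,z₂) = (z₁z₂ - t)/(1 - tz₁z₂) for fixed t ∈ (0,1). In particular, comparing coefficients of z₁^n forces B₁D₁^{n-1}C₁ = 0 for all n ≥ 1, which together with B₁*B₁ + D₁*D₁ = I and D₁ ∈ C₀· forces C₁ = 0, then B₁ = 0, then D₁*D₁ = I, contradicting D₁ ∈ C₀· (unless H₁ = 0, in which case the coefficient of z₁z₂, namely (1-t²), cannot be produced). -/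
open ContinuousLinearMap Filter Metric

set_option linter.unusedSectionVars false


lemma coeffs_zero (a : ℕ → ℂ) (M : ℝ) (hM : ∀ n, ‖a n‖ ≤ M) (r : ℝ) (hr : 0 < r) (hr1 : r < 1)
    (h : ∀ z : ℂ, ‖z‖ < r → ∑' n : ℕ, z ^ (n + 1) * a n = 0) : ∀ n, a n = 0 := by
  have hM0 : 0 ≤ M := (norm_nonneg _).trans (hM 0)
  have hsum : ∀ (m : ℕ) (z : ℂ), ‖z‖ < 1 → Summable (fun n : ℕ => z ^ (n + 1) * a (m + n)) := by
    intro m z hz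
    refine Summable.of_norm_bounded
      ((summable_geometric_of_lt_one (norm_nonneg z) hz).mul_left M) (fun n => ?_)
    rw [norm_mul, norm_pow]
    calc ‖z‖ ^ (n + 1) * ‖a (m + n)‖ ≤ ‖z‖ ^ n * M := by
          apply mul_le_mul _ (hM _) (norm_nonneg _) (pow_nonneg (norm_nonneg _) _)
          exact pow_le_pow_of_le_one (norm_nonneg _) hz.le (by omega)
      _ = M * ‖z‖ ^ n := mul_comm _ _
  have hsplit : ∀ (m : ℕ) (z : ℂ), ‖z‖ < r →
      (∑' n : ℕ, z ^ (n + 1) * a (m + n)) =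
        z * a m + z * ∑' n : ℕ, z ^ (n + 1) * a (m + 1 + n) := by
    intro m z hz
    rw [Summable.tsum_eq_zero_add (hsum m z (hz.trans hr1))]
    congr 1
    · simp
    · rw [← tsum_mul_left]
      apply tsum_congr; intro n
      have hmn : m + (n + 1) = m + 1 + n := by omega
      rw [hmn]; ring
  have hT : ∀ (m : ℕ) (z : ℂ), ‖z‖ < r →
      ‖∑' n : ℕ, z ^ (n + 1) * a (m + n)‖ ≤ ‖z‖ * (M * (1 - r)⁻¹) := by
    intro m z hz
    have hz1 : ‖z‖ < 1 := hz.trans hr1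
    have h1 : Summable (fun n : ℕ => ‖z ^ (n + 1) * a (m + n)‖) := by
      refine Summable.of_nonneg_of_le (fun n => norm_nonneg _) (fun n => ?_)
        ((summable_geometric_of_lt_one (norm_nonneg z) hz1).mul_left (‖z‖ * M))
      rw [norm_mul, norm_pow, pow_succ']
      calc ‖z‖ * ‖z‖ ^ n * ‖a (m + n)‖ ≤ ‖z‖ * ‖z‖ ^ n * M := by
            apply mul_le_mul_of_nonneg_left (hM _)
              (mul_nonneg (norm_nonneg _) (pow_nonneg (norm_nonneg _) _))
        _ = ‖z‖ * M * ‖z‖ ^ n := by ring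
    calc ‖∑' n : ℕ, z ^ (n + 1) * a (m + n)‖ ≤ ∑' n : ℕ, ‖z ^ (n + 1) * a (m + n)‖ :=
          norm_tsum_le_tsum_norm h1
      _ ≤ ∑' n : ℕ, ‖z‖ * M * ‖z‖ ^ n := by
          refine Summable.tsum_le_tsum (fun n => ?_) h1
            ((summable_geometric_of_lt_one (norm_nonneg z) hz1).mul_left (‖z‖ * M))
          rw [norm_mul, norm_pow, pow_succ']
          calc ‖z‖ * ‖z‖ ^ n * ‖a (m + n)‖ ≤ ‖z‖ * ‖z‖ ^ n * M := by
                apply mul_le_mul_of_nonneg_left (hM _)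
                  (mul_nonneg (norm_nonneg _) (pow_nonneg (norm_nonneg _) _))
            _ = ‖z‖ * M * ‖z‖ ^ n := by ring
      _ = ‖z‖ * M * (1 - ‖z‖)⁻¹ := by
          rw [tsum_mul_left, tsum_geometric_of_lt_one (norm_nonneg z) hz1]
      _ ≤ ‖z‖ * (M * (1 - r)⁻¹) := by
          rw [mul_assoc]
          apply mul_le_mul_of_nonneg_left _ (norm_nonneg z)
          apply mul_le_mul_of_nonneg_left _ hM0
          exact inv_anti₀ (by linarith) (by linarith)
  have step : ∀ m : ℕ, (∀ z : ℂ, ‖z‖ < r → ∑' n : ℕ, z ^ (n + 1) * a (m + n) = 0) → a m = 0 := by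
    intro m hm
    by_contra hne
    set C := M * (1 - r)⁻¹ with hCdef
    have hC0 : 0 ≤ C := mul_nonneg hM0 (inv_nonneg.2 (by linarith))
    have hapos : 0 < ‖a m‖ := norm_pos_iff.2 hne
    set ε : ℝ := min (r / 2) (‖a m‖ / (2 * (C + 1))) with hεdef
    have hεpos : 0 < ε := lt_min (by linarith) (div_pos hapos (by linarith))
    have hεnorm : ‖(ε : ℂ)‖ = ε := by
      rw [Complex.norm_real]; exact Real.norm_of_nonneg hεpos.le
    have hεr : ‖(ε : ℂ)‖ < r := by
      rw [hεnorm]; calc ε ≤ r / 2 := min_le_left _ _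
        _ < r := by linarith
    have h0 := hm (ε : ℂ) hεr
    rw [hsplit m _ hεr] at h0
    have hz0 : (ε : ℂ) ≠ 0 := by
      simpa using ne_of_gt hεpos
    have h2 : a m + (∑' n : ℕ, (ε : ℂ) ^ (n + 1) * a (m + 1 + n)) = 0 := by
      have : (ε : ℂ) * (a m + ∑' n : ℕ, (ε : ℂ) ^ (n + 1) * a (m + 1 + n)) = 0 := by
        rw [mul_add]; exact h0
      rcases mul_eq_zero.1 this with h' | h'
      · exact absurd h' hz0
      · exact h'
    have h3 : ‖a m‖ ≤ ε * C := by
      have : a m = -(∑' n : ℕ, (ε : ℂ) ^ (n + 1) * a (m + 1 + n)) := by linear_combination h2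
      rw [this, norm_neg]
      calc ‖∑' n : ℕ, (ε : ℂ) ^ (n + 1) * a (m + 1 + n)‖ ≤ ‖(ε : ℂ)‖ * (M * (1 - r)⁻¹) :=
            hT (m + 1) _ hεr
        _ = ε * C := by rw [hεnorm]
    have h4 : ε ≤ ‖a m‖ / (2 * (C + 1)) := min_le_right _ _
    have h5 : ε * (2 * (C + 1)) ≤ ‖a m‖ := (le_div_iff₀ (by positivity)).1 h4
    nlinarith [mul_nonneg hεpos.le hC0]
  have main : ∀ (m : ℕ) (z : ℂ), ‖z‖ < r → ∑' n : ℕ, z ^ (n + 1) * a (m + n) = 0 := by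
    intro m
    induction m with
    | zero => intro z hz; simpa using h z hz
    | succ m ih =>
      have ham : a m = 0 := step m ih
      intro z hz
      rcases eq_or_ne z 0 with rfl | hz0
      · simp
      · have h0 := ih z hz
        rw [hsplit m z hz, ham, mul_zero, zero_add] at h0
        rcases mul_eq_zero.1 h0 with h' | h'
        · exact absurd h' hz0
        · exact h'
  exact fun n => step n (main n)

section

variable {H₁ H₂ : Type*}
  [NormedAddCommGroup H₁] [InnerProductSpace ℂ H₁] [CompleteSpace H₁]
  [NormedAddCommGroup H₂] [InnerProductSpace ℂ H₂] [CompleteSpace H₂]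

/-- `E(z) = z₁ I_{H₁} ⊕ z₂ I_{H₂}` on `H₁ ⊕ H₂`. -/
noncomputable def Eop (z₁ z₂ : ℂ) : (H₁ × H₂) →L[ℂ] H₁ × H₂ :=
  (z₁ • ContinuousLinearMap.fst ℂ H₁ H₂).prod (z₂ • ContinuousLinearMap.snd ℂ H₁ H₂)

/-- The block operator `D = [[D₁, D₂],[0, D₃]]` on `H₁ ⊕ H₂`. -/
noncomputable def Dop (D₁ : H₁ →L[ℂ] H₁) (D₂ : H₂ →L[ℂ] H₁) (D₃ : H₂ →L[ℂ] H₂) :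
    (H₁ × H₂) →L[ℂ] H₁ × H₂ :=
  (D₁.coprod D₂).prod ((0 : H₁ →L[ℂ] H₂).coprod D₃)

/-- The transfer function `τ_V(z) = a + B (I - E(z)D)^{-1} E(z) C` of the colligation
`V = [[a, B₁, B₂],[C₁, D₁, D₂],[C₂, 0, D₃]]`. -/
noncomputable def transferFn (a : ℂ) (B₁ : H₁ →L[ℂ] ℂ) (B₂ : H₂ →L[ℂ] ℂ)
    (C₁ : H₁) (C₂ : H₂) (D₁ : H₁ →L[ℂ] H₁) (D₂ : H₂ →L[ℂ] H₁) (D₃ : H₂ →L[ℂ] H₂)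
    (z₁ z₂ : ℂ) : ℂ :=
  a + (B₁.coprod B₂)
    ((Ring.inverse (1 - (Eop z₁ z₂) * (Dop D₁ D₂ D₃)) :
        (H₁ × H₂) →L[ℂ] H₁ × H₂) ((Eop z₁ z₂) (C₁, C₂)))

lemma inverse_apply_tsum' {X : Type*} [NormedAddCommGroup X] [NormedSpace ℂ X] [CompleteSpace X]
    (K : X →L[ℂ] X) (hK : ‖K‖ < 1) (v : X) (B : X →L[ℂ] ℂ) :
    B ((Ring.inverse (1 - K) : X →L[ℂ] X) v) = ∑' n : ℕ, B ((K ^ n) v) := by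
  rw [← geom_series_eq_inverse K hK]
  have hs : Summable fun n : ℕ => K ^ n := summable_geometric_of_norm_lt_one hK
  have h1 : (∑' n : ℕ, K ^ n) v = ∑' n : ℕ, (K ^ n) v :=
    (ContinuousLinearMap.apply ℂ X v).map_tsum hs
  rw [h1]
  exact B.map_tsum (hs.map (ContinuousLinearMap.apply ℂ X v)
    (ContinuousLinearMap.apply ℂ X v).continuous)

lemma Eop_apply' (z₁ z₂ : ℂ) (x : H₁ × H₂) :
    (Eop z₁ z₂ : (H₁ × H₂) →L[ℂ] H₁ × H₂) x = (z₁ • x.1, z₂ • x.2) := rfl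

lemma Dop_apply' (D₁ : H₁ →L[ℂ] H₁) (D₂ : H₂ →L[ℂ] H₁) (D₃ : H₂ →L[ℂ] H₂) (x : H₁ × H₂) :
    Dop D₁ D₂ D₃ x = (D₁ x.1 + D₂ x.2, D₃ x.2) := by
  simp [Dop, ContinuousLinearMap.prod_apply, ContinuousLinearMap.coprod_apply]

lemma Eop_norm_le' (z₁ z₂ : ℂ) :
    ‖(Eop z₁ z₂ : (H₁ × H₂) →L[ℂ] H₁ × H₂)‖ ≤ max ‖z₁‖ ‖z₂‖ := by
  refine ContinuousLinearMap.opNorm_le_bound _ (le_max_iff.2 (Or.inl (norm_nonneg _))) ?_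
  intro x
  rw [Eop_apply', Prod.norm_def, Prod.norm_def]
  simp only [norm_smul]
  apply max_le
  · exact mul_le_mul (le_max_left _ _) (le_max_left _ _) (norm_nonneg _)
      (le_trans (norm_nonneg _) (le_max_left _ _))
  · exact mul_le_mul (le_max_right _ _) (le_max_right _ _) (norm_nonneg _)
      (le_trans (norm_nonneg _) (le_max_left _ _))

lemma transfer_tsum (a : ℂ) (B₁ : H₁ →L[ℂ] ℂ) (B₂ : H₂ →L[ℂ] ℂ)
    (C₁ : H₁) (C₂ : H₂) (D₁ : H₁ →L[ℂ] H₁) (D₂ : H₂ →L[ℂ] H₁) (D₃ : H₂ →L[ℂ] H₂)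
    (z₁ z₂ : ℂ) (hK : ‖(Eop z₁ z₂) * (Dop D₁ D₂ D₃)‖ < 1) :
    transferFn a B₁ B₂ C₁ C₂ D₁ D₂ D₃ z₁ z₂ =
      a + ∑' n : ℕ, (B₁.coprod B₂)
        (((((Eop z₁ z₂) * (Dop D₁ D₂ D₃) : (H₁ × H₂) →L[ℂ] H₁ × H₂)) ^ n) ((Eop z₁ z₂) (C₁, C₂))) := by
  unfold transferFn
  rw [inverse_apply_tsum' _ hK]

end

section

variable {H₁ H₂ : Type*}
  [NormedAddCommGroup H₁] [InnerProductSpace ℂ H₁] [CompleteSpace H₁]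
  [NormedAddCommGroup H₂] [InnerProductSpace ℂ H₂] [CompleteSpace H₂]

set_option maxHeartbeats 1000000 in
/-- There is no isometric colligation
`V = [[−t, B₁, B₂],[C₁, D₁, D₂],[C₂, 0, D₃]]` on `ℂ ⊕ H₁ ⊕ H₂` with `D₁ ∈ C₀·` whose
transfer function equals `φ_t(z₁,z₂) = (z₁z₂ - t)/(1 - t z₁z₂)`, for fixed `t ∈ (0,1)`.
The isometry of `V` is expressed by preservation of the norm of `ℂ ⊕ H₁ ⊕ H₂`. -/
theorem stmt_12 (t : ℝ) (ht : t ∈ Set.Ioo (0 : ℝ) 1)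
    (B₁ : H₁ →L[ℂ] ℂ) (B₂ : H₂ →L[ℂ] ℂ) (C₁ : H₁) (C₂ : H₂)
    (D₁ : H₁ →L[ℂ] H₁) (D₂ : H₂ →L[ℂ] H₁) (D₃ : H₂ →L[ℂ] H₂)
    (hV : ∀ (c : ℂ) (h₁ : H₁) (h₂ : H₂),
      ‖(-(t : ℂ)) * c + B₁ h₁ + B₂ h₂‖ ^ 2 + ‖c • C₁ + D₁ h₁ + D₂ h₂‖ ^ 2 +
        ‖c • C₂ + D₃ h₂‖ ^ 2 = ‖c‖ ^ 2 + ‖h₁‖ ^ 2 + ‖h₂‖ ^ 2)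
    (hD₁ : ∀ x : H₁, Tendsto (fun n : ℕ => (D₁ ^ n) x) atTop (nhds 0))
    (hτ : ∀ z₁ ∈ ball (0 : ℂ) 1, ∀ z₂ ∈ ball (0 : ℂ) 1,
      transferFn (-(t : ℂ)) B₁ B₂ C₁ C₂ D₁ D₂ D₃ z₁ z₂ =
        (z₁ * z₂ - (t : ℂ)) / (1 - (t : ℂ) * z₁ * z₂)) :
    False := by
  obtain ⟨ht0, ht1⟩ := ht
  -- column identities from the isometry
  have hi : ∀ h : H₁, ‖B₁ h‖ ^ 2 + ‖D₁ h‖ ^ 2 = ‖h‖ ^ 2 := by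
    intro h
    have e := hV 0 h 0
    simpa using e
  have hii : t ^ 2 + ‖C₁‖ ^ 2 + ‖C₂‖ ^ 2 = 1 := by
    have e := hV 1 0 0
    have hn : ‖-(t : ℂ) * 1‖ = t := by
      simp [abs_of_pos ht0]
    simpa [hn] using e
  have hsq : ∀ z : ℂ, ‖z‖ ^ 2 = z.re ^ 2 + z.im ^ 2 := by
    intro z; rw [Complex.sq_norm, Complex.normSq_apply]; ring
  have hre : ∀ h : H₁, (inner ℂ C₁ (D₁ h) : ℂ).re = t * (B₁ h).re := by
    intro h
    have e := hV 1 h 0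
    simp only [map_zero, add_zero, mul_one, one_smul, norm_one, norm_zero, one_pow, zero_pow] at e
    have hA : ‖-(t : ℂ) + B₁ h‖ ^ 2 = t ^ 2 - 2 * t * (B₁ h).re + ‖B₁ h‖ ^ 2 := by
      rw [hsq, hsq]
      simp [Complex.add_re, Complex.add_im, Complex.neg_re, Complex.neg_im,
        Complex.ofReal_re, Complex.ofReal_im]
      ring
    have hB : ‖C₁ + D₁ h‖ ^ 2 = ‖C₁‖ ^ 2 + 2 * (inner ℂ C₁ (D₁ h) : ℂ).re + ‖D₁ h‖ ^ 2 := by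
      have := @norm_add_sq ℂ H₁ _ _ _ C₁ (D₁ h)
      simpa using this
    rw [hA, hB] at e
    have h1 := hi h
    linarith
  have hcross : ∀ h : H₁, (inner ℂ C₁ (D₁ h) : ℂ) = (t : ℂ) * B₁ h := by
    intro h
    have h1 := hre h
    have h2 := hre ((Complex.I : ℂ) • h)
    rw [map_smul, map_smul, inner_smul_right] at h2
    simp only [smul_eq_mul, Complex.mul_re, Complex.I_re, Complex.I_im] at h2
    apply Complex.ext
    · simpa [Complex.mul_re, Complex.ofReal_re, Complex.ofReal_im] using h1
    · simp only [Complex.mul_im, Complex.ofReal_re, Complex.ofReal_im]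
      linarith
  set N := ‖(Dop D₁ D₂ D₃ : (H₁ × H₂) →L[ℂ] H₁ × H₂)‖ with hNdef
  have hN0 : 0 ≤ N := hNdef ▸ norm_nonneg (Dop D₁ D₂ D₃ : (H₁ × H₂) →L[ℂ] H₁ × H₂)
  set r₀ : ℝ := 1 / (2 * (N + 1)) with hr₀def
  have hr₀pos : 0 < r₀ := by positivity
  have hr₀lt1 : r₀ < 1 := by
    rw [hr₀def, div_lt_one (by linarith)]; linarith
  have hKsmall : ∀ z₁ z₂ : ℂ, ‖z₁‖ < r₀ → ‖z₂‖ < r₀ →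
      ‖(Eop z₁ z₂) * (Dop D₁ D₂ D₃ : (H₁ × H₂) →L[ℂ] H₁ × H₂)‖ < 1 := by
    intro z₁ z₂ h1 h2
    have hE := Eop_norm_le' (H₁ := H₁) (H₂ := H₂) z₁ z₂
    have hmax : max ‖z₁‖ ‖z₂‖ < r₀ := max_lt h1 h2
    calc ‖(Eop z₁ z₂) * (Dop D₁ D₂ D₃ : (H₁ × H₂) →L[ℂ] H₁ × H₂)‖
        ≤ ‖(Eop z₁ z₂ : (H₁ × H₂) →L[ℂ] H₁ × H₂)‖ * N := ContinuousLinearMap.opNorm_comp_le _ _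
      _ ≤ r₀ * N := mul_le_mul (hE.trans hmax.le) le_rfl hN0 hr₀pos.le
      _ < 1 := by
          rw [hr₀def, div_mul_eq_mul_div, one_mul, div_lt_one (by linarith)]; linarith
  have hDpow : ∀ (z₁ : ℂ) (n : ℕ),
      ((((Eop z₁ 0) * (Dop D₁ D₂ D₃) : (H₁ × H₂) →L[ℂ] H₁ × H₂)) ^ n)
          ((Eop z₁ 0) ((C₁, C₂) : H₁ × H₂)) =
        (z₁ ^ (n + 1) • ((D₁ ^ n) C₁), (0 : H₂)) := by
    intro z₁ n
    induction n with
    | zero => simp [Eop_apply']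
    | succ n ih =>
        rw [pow_succ', ContinuousLinearMap.mul_apply, ih, ContinuousLinearMap.mul_apply,
          Dop_apply', Eop_apply']
        refine Prod.ext ?_ ?_
        · simp only [map_smul, map_zero, add_zero, smul_smul]
          rw [pow_succ' D₁, ContinuousLinearMap.mul_apply, ← pow_succ']
        · simp
  set a : ℕ → ℂ := fun n => B₁ ((D₁ ^ n) C₁) with hadef
  have hball : ∀ z : ℂ, ‖z‖ < r₀ → z ∈ ball (0 : ℂ) 1 := by
    intro z hz; rw [mem_ball_zero_iff]; exact hz.trans hr₀lt1
  have hzero : ∀ z : ℂ, ‖z‖ < r₀ → ∑' n : ℕ, z ^ (n + 1) * a n = 0 := by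
    intro z hz
    have h0r : ‖(0 : ℂ)‖ < r₀ := by simpa using hr₀pos
    have hτ0 := hτ z (hball z hz) 0 (hball 0 h0r)
    rw [transfer_tsum _ _ _ _ _ _ _ _ _ _ (hKsmall z 0 hz h0r)] at hτ0
    have hterm : ∀ n : ℕ, (B₁.coprod B₂)
        ((((Eop z 0) * (Dop D₁ D₂ D₃) : (H₁ × H₂) →L[ℂ] H₁ × H₂) ^ n)
          ((Eop z 0) ((C₁, C₂) : H₁ × H₂))) = z ^ (n + 1) * a n := by
      intro n
      rw [hDpow z n, ContinuousLinearMap.coprod_apply]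
      simp [hadef, smul_eq_mul]
    rw [tsum_congr hterm] at hτ0
    have hrhs : (z * 0 - (t : ℂ)) / (1 - (t : ℂ) * z * 0) = -(t : ℂ) := by
      simp
    rw [hrhs] at hτ0
    calc ∑' n : ℕ, z ^ (n + 1) * a n
        = -(t : ℂ) + ∑' n : ℕ, z ^ (n + 1) * a n + (t : ℂ) := by ring
      _ = 0 := by rw [hτ0]; ring
  have hanorm : ∀ n : ℕ, ‖a n‖ ≤ ‖B₁‖ * ‖C₁‖ := by
    have hD1 : ∀ x : H₁, ‖D₁ x‖ ≤ ‖x‖ := by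
      intro x
      have h1 := hi x
      nlinarith [norm_nonneg (D₁ x), norm_nonneg x, norm_nonneg (B₁ x),
        sq_nonneg (‖D₁ x‖ - ‖x‖), sq_nonneg (‖D₁ x‖ + ‖x‖)]
    have hpow : ∀ n : ℕ, ‖(D₁ ^ n) C₁‖ ≤ ‖C₁‖ := by
      intro n
      induction n with
      | zero => simp
      | succ n ih =>
          calc ‖(D₁ ^ (n + 1)) C₁‖ = ‖D₁ ((D₁ ^ n) C₁)‖ := by
                rw [pow_succ' D₁, ContinuousLinearMap.mul_apply]
            _ ≤ ‖(D₁ ^ n) C₁‖ := hD1 _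
            _ ≤ ‖C₁‖ := ih
    intro n
    calc ‖a n‖ ≤ ‖B₁‖ * ‖(D₁ ^ n) C₁‖ := B₁.le_opNorm _
      _ ≤ ‖B₁‖ * ‖C₁‖ := mul_le_mul_of_nonneg_left (hpow n) (norm_nonneg _)
  have ha0 : ∀ n : ℕ, a n = 0 :=
    coeffs_zero a (‖B₁‖ * ‖C₁‖) hanorm r₀ hr₀pos hr₀lt1 hzero
  -- step 3 : C₁ = 0
  have hconst : ∀ n : ℕ, ‖(D₁ ^ n) C₁‖ = ‖C₁‖ := by
    intro n
    induction n with
    | zero => simp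
    | succ n ih =>
        have h1 := hi ((D₁ ^ n) C₁)
        have h2 : B₁ ((D₁ ^ n) C₁) = 0 := ha0 n
        rw [h2, norm_zero] at h1
        have h3 : ‖(D₁ ^ (n + 1)) C₁‖ ^ 2 = ‖(D₁ ^ n) C₁‖ ^ 2 := by
          rw [pow_succ' D₁, ContinuousLinearMap.mul_apply]
          nlinarith
        have h4 : ‖(D₁ ^ (n + 1)) C₁‖ = ‖(D₁ ^ n) C₁‖ := by
          nlinarith [norm_nonneg ((D₁ ^ (n + 1)) C₁), norm_nonneg ((D₁ ^ n) C₁),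
            sq_nonneg (‖(D₁ ^ (n + 1)) C₁‖ - ‖(D₁ ^ n) C₁‖),
            sq_nonneg (‖(D₁ ^ (n + 1)) C₁‖ + ‖(D₁ ^ n) C₁‖)]
        rw [h4, ih]
  have hC₁ : C₁ = 0 := by
    have h1 : Tendsto (fun n : ℕ => ‖(D₁ ^ n) C₁‖) atTop (nhds 0) := by
      simpa using (hD₁ C₁).norm
    have h2 : Tendsto (fun n : ℕ => ‖(D₁ ^ n) C₁‖) atTop (nhds ‖C₁‖) := by
      have : (fun n : ℕ => ‖(D₁ ^ n) C₁‖) = fun _ : ℕ => ‖C₁‖ := funext hconst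
      rw [this]; exact tendsto_const_nhds
    have h3 : ‖C₁‖ = 0 := tendsto_nhds_unique h2 h1
    exact norm_eq_zero.1 h3
  -- step 4 : B₁ = 0
  have hB₁ : B₁ = 0 := by
    ext h
    have h1 := hcross h
    rw [hC₁] at h1
    simp only [inner_zero_left] at h1
    have ht0' : (t : ℂ) ≠ 0 := by
      simp only [Ne, Complex.ofReal_eq_zero]; linarith
    have := (mul_eq_zero.1 h1.symm).resolve_left ht0'
    simpa using this
  -- step 5 : the transfer function does not depend on z₁
  have hsnd : ∀ (z₁ z₂ : ℂ) (n : ℕ) (v : H₁ × H₂),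
      (((((Eop z₁ z₂) * (Dop D₁ D₂ D₃) : (H₁ × H₂) →L[ℂ] H₁ × H₂)) ^ n) v).2 =
        z₂ ^ n • ((D₃ ^ n) v.2) := by
    intro z₁ z₂ n v
    induction n with
    | zero => simp
    | succ n ih =>
        rw [pow_succ', ContinuousLinearMap.mul_apply, ContinuousLinearMap.mul_apply,
          Dop_apply', Eop_apply']
        show z₂ • D₃ ((((Eop z₁ z₂) * (Dop D₁ D₂ D₃) : (H₁ × H₂) →L[ℂ] H₁ × H₂) ^ n) v).2 = _
        rw [ih, map_smul, smul_smul]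
        rw [pow_succ' D₃, ContinuousLinearMap.mul_apply, ← pow_succ']
  have hrep : ∀ z₁ z₂ : ℂ, ‖z₁‖ < r₀ → ‖z₂‖ < r₀ →
      transferFn (-(t : ℂ)) B₁ B₂ C₁ C₂ D₁ D₂ D₃ z₁ z₂ =
        -(t : ℂ) + ∑' n : ℕ, z₂ ^ (n + 1) * B₂ ((D₃ ^ n) C₂) := by
    intro z₁ z₂ h1 h2
    rw [transfer_tsum _ _ _ _ _ _ _ _ _ _ (hKsmall z₁ z₂ h1 h2)]
    congr 1
    apply tsum_congr
    intro n
    rw [ContinuousLinearMap.coprod_apply, hB₁, hsnd]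
    have hv2 : ((Eop z₁ z₂) ((C₁, C₂) : H₁ × H₂)).2 = z₂ • C₂ := rfl
    rw [hv2, map_smul, map_smul, map_smul]
    simp only [ContinuousLinearMap.zero_apply, zero_add, smul_eq_mul]
    rw [pow_succ']
    ring
  -- final contradiction
  set ρ : ℝ := r₀ / 2 with hρdef
  have hρpos : 0 < ρ := by rw [hρdef]; positivity
  have hρlt : ρ < r₀ := by rw [hρdef]; linarith
  have hρr : ‖((ρ : ℝ) : ℂ)‖ < r₀ := by
    rw [Complex.norm_real, Real.norm_of_nonneg hρpos.le]; exact hρlt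
  have hρneg : ‖(-((ρ : ℝ) : ℂ))‖ < r₀ := by rw [norm_neg]; exact hρr
  have e1 := hτ ((ρ : ℝ) : ℂ) (hball _ hρr) ((ρ : ℝ) : ℂ) (hball _ hρr)
  have e2 := hτ (-((ρ : ℝ) : ℂ)) (hball _ hρneg) ((ρ : ℝ) : ℂ) (hball _ hρr)
  rw [hrep _ _ hρr hρr] at e1
  rw [hrep _ _ hρneg hρr] at e2
  have heqC : (((ρ : ℝ) : ℂ) * ((ρ : ℝ) : ℂ) - (t : ℂ)) / (1 - (t : ℂ) * ((ρ : ℝ) : ℂ) * ((ρ : ℝ) : ℂ)) =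
      ((-((ρ : ℝ) : ℂ)) * ((ρ : ℝ) : ℂ) - (t : ℂ)) / (1 - (t : ℂ) * (-((ρ : ℝ) : ℂ)) * ((ρ : ℝ) : ℂ)) := by
    rw [← e1, ← e2]
  have hρ1 : ρ < 1 := hρlt.trans hr₀lt1
  have hd1 : (1 - (t : ℂ) * ((ρ : ℝ) : ℂ) * ((ρ : ℝ) : ℂ)) ≠ 0 := by
    have heq : (1 - (t : ℂ) * ((ρ : ℝ) : ℂ) * ((ρ : ℝ) : ℂ)) = ((1 - t * (ρ * ρ) : ℝ) : ℂ) := by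
      push_cast; ring
    rw [heq, Ne, Complex.ofReal_eq_zero]
    intro hc
    nlinarith
  have hd2 : (1 - (t : ℂ) * (-((ρ : ℝ) : ℂ)) * ((ρ : ℝ) : ℂ)) ≠ 0 := by
    have heq : (1 - (t : ℂ) * (-((ρ : ℝ) : ℂ)) * ((ρ : ℝ) : ℂ)) = ((1 + t * (ρ * ρ) : ℝ) : ℂ) := by
      push_cast; ring
    rw [heq, Ne, Complex.ofReal_eq_zero]
    intro hc
    nlinarith
  rw [div_eq_div_iff hd1 hd2] at heqC
  have hkey : (2 * (ρ * ρ) * (1 - t ^ 2) : ℝ) = 0 := by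
    have hC : ((2 * (ρ * ρ) * (1 - t ^ 2) : ℝ) : ℂ) = 0 := by
      push_cast
      linear_combination heqC
    exact_mod_cast hC
  have h1t : t ^ 2 < 1 := by nlinarith
  nlinarith [mul_pos (mul_pos hρpos hρpos) (by linarith : (0:ℝ) < 1 - t ^ 2)]

end
end

section
/- Let V₁ = [[a₁, B₁],[C₁, D₁]] ∈ B(ℂ ⊕ H₁) and V₂ = [[a₂, B₂],[C₂, D₂]] ∈ B(ℂ ⊕ H₂) be co-isometries. Then V = [[a₁a₂, B₁, a₁B₂],[a₂C₁, D₁, C₁B₂],[C₂, 0, D₂]] is a co-isometry on ℂ ⊕ H₁ ⊕ H₂. -/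
open ContinuousLinearMap

lemma aux_adjoint_smulRight {H₁ H₂ : Type*}
    [NormedAddCommGroup H₁] [InnerProductSpace ℂ H₁] [CompleteSpace H₁]
    [NormedAddCommGroup H₂] [InnerProductSpace ℂ H₂] [CompleteSpace H₂]
    (B₂ : H₂ →L[ℂ] ℂ) (C₁ : H₁) (k₁ : H₁) :
    (adjoint (B₂.smulRight C₁)) k₁ = (adjoint B₂) (inner ℂ C₁ k₁ : ℂ) := by
  apply ext_inner_left ℂ
  intro v
  rw [adjoint_inner_right, adjoint_inner_right]
  simp [smulRight_apply, inner_smul_left, RCLike.inner_apply, mul_comm]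

/-- If `V₁ = [[a₁, B₁],[C₁, D₁]]` and `V₂ = [[a₂, B₂],[C₂, D₂]]` are
co-isometries on `ℂ ⊕ H₁` and `ℂ ⊕ H₂`, then
`V = [[a₁a₂, B₁, a₁B₂],[a₂C₁, D₁, C₁B₂],[C₂, 0, D₂]]` is a co-isometry on `ℂ ⊕ H₁ ⊕ H₂`.
A colligation `[[a, B],[C, D]]` (with `B : H →L ℂ` and column `C ∈ H`) is a co-isometry iff
its adjoint `(d, k) ↦ (ā d + ⟪C, k⟫, B* d + D* k)` preserves the norm of `ℂ ⊕ H`; the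
entry `C₁B₂ : H₂ → H₁` is `h ↦ (B₂ h) • C₁`, i.e. `B₂.smulRight C₁`. -/
theorem stmt_15 {H₁ H₂ : Type*}
    [NormedAddCommGroup H₁] [InnerProductSpace ℂ H₁] [CompleteSpace H₁]
    [NormedAddCommGroup H₂] [InnerProductSpace ℂ H₂] [CompleteSpace H₂]
    (a₁ a₂ : ℂ) (B₁ : H₁ →L[ℂ] ℂ) (B₂ : H₂ →L[ℂ] ℂ) (C₁ : H₁) (C₂ : H₂)
    (D₁ : H₁ →L[ℂ] H₁) (D₂ : H₂ →L[ℂ] H₂)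
    (hV₁ : ∀ (d : ℂ) (k : H₁),
      ‖(starRingEnd ℂ) a₁ * d + (inner ℂ C₁ k : ℂ)‖ ^ 2 +
        ‖(adjoint B₁) d + (adjoint D₁) k‖ ^ 2 = ‖d‖ ^ 2 + ‖k‖ ^ 2)
    (hV₂ : ∀ (d : ℂ) (k : H₂),
      ‖(starRingEnd ℂ) a₂ * d + (inner ℂ C₂ k : ℂ)‖ ^ 2 +
        ‖(adjoint B₂) d + (adjoint D₂) k‖ ^ 2 = ‖d‖ ^ 2 + ‖k‖ ^ 2) :
    ∀ (d : ℂ) (k₁ : H₁) (k₂ : H₂),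
      ‖(starRingEnd ℂ) (a₁ * a₂) * d + (inner ℂ (a₂ • C₁) k₁ : ℂ) + (inner ℂ C₂ k₂ : ℂ)‖ ^ 2 +
        ‖(adjoint B₁) d + (adjoint D₁) k₁‖ ^ 2 +
        ‖(adjoint (a₁ • B₂)) d + (adjoint (B₂.smulRight C₁)) k₁ + (adjoint D₂) k₂‖ ^ 2 =
        ‖d‖ ^ 2 + ‖k₁‖ ^ 2 + ‖k₂‖ ^ 2 := by
  intro d k₁ k₂
  set e : ℂ := (starRingEnd ℂ) a₁ * d + (inner ℂ C₁ k₁ : ℂ) with he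
  have h1 := hV₁ d k₁
  have h2 := hV₂ e k₂
  have hfirst : (starRingEnd ℂ) (a₁ * a₂) * d + (inner ℂ (a₂ • C₁) k₁ : ℂ) + (inner ℂ C₂ k₂ : ℂ)
      = (starRingEnd ℂ) a₂ * e + (inner ℂ C₂ k₂ : ℂ) := by
    rw [he, inner_smul_left]
    ring_nf
    rw [map_mul]
    ring
  have hsecond : (adjoint (a₁ • B₂)) d + (adjoint (B₂.smulRight C₁)) k₁ + (adjoint D₂) k₂
      = (adjoint B₂) e + (adjoint D₂) k₂ := by
    rw [he, aux_adjoint_smulRight, map_add]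
    congr 2
    apply ext_inner_left ℂ
    intro v
    rw [adjoint_inner_right, adjoint_inner_right]
    simp [RCLike.inner_apply, mul_comm, mul_left_comm]
  rw [hfirst, hsecond]
  linarith
end

section
/- Let V = [[a, B₁, B₂],[C₁, D₁, D₂],[C₂, 0, D₃]] be a unitary operator on ℂ ⊕ ℂ^p ⊕ ℂ^q with a ≠ 0 and D₃ invertible. Then a D₂ = C₁ B₂. -/
open Matrix

/-- Let `V = [[a, B₁, B₂],[C₁, D₁, D₂],[C₂, 0, D₃]]` be a unitary operator on
`ℂ ⊕ ℂ^p ⊕ ℂ^q` with `a ≠ 0` and `D₃` invertible. Then `a D₂ = C₁ B₂`. -/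
theorem stmt_18 {p q : ℕ} (a : ℂ)
    (B₁ : Matrix (Fin 1) (Fin p) ℂ) (B₂ : Matrix (Fin 1) (Fin q) ℂ)
    (C₁ : Matrix (Fin p) (Fin 1) ℂ) (C₂ : Matrix (Fin q) (Fin 1) ℂ)
    (D₁ : Matrix (Fin p) (Fin p) ℂ) (D₂ : Matrix (Fin p) (Fin q) ℂ)
    (D₃ : Matrix (Fin q) (Fin q) ℂ)
    (ha : a ≠ 0) (hD₃ : IsUnit D₃)
    (hU : fromBlocks (Matrix.of fun _ _ : Fin 1 => a) (fromCols B₁ B₂)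
        (fromRows C₁ C₂) (fromBlocks D₁ D₂ 0 D₃) ∈
      Matrix.unitaryGroup (Fin 1 ⊕ (Fin p ⊕ Fin q)) ℂ) :
    a • D₂ = C₁ * B₂ := by
  have h := mem_unitaryGroup_iff.mp hU
  rw [Matrix.star_eq_conjTranspose, fromBlocks_conjTranspose,
    conjTranspose_fromCols_eq_fromRows_conjTranspose,
    conjTranspose_fromRows_eq_fromCols_conjTranspose,
    fromBlocks_conjTranspose, fromBlocks_multiply] at h
  -- extract (1,2) and (2,2) blocks
  have h12 := congrArg Matrix.toBlocks₁₂ h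
  have h22 := congrArg Matrix.toBlocks₂₂ h
  rw [toBlocks_fromBlocks₁₂] at h12
  rw [toBlocks_fromBlocks₂₂] at h22
  have hone : (1 : Matrix (Fin 1 ⊕ (Fin p ⊕ Fin q)) (Fin 1 ⊕ (Fin p ⊕ Fin q)) ℂ)
      = fromBlocks 1 0 0 1 := by
    rw [fromBlocks_one]
  rw [hone, toBlocks_fromBlocks₁₂] at h12
  rw [hone, toBlocks_fromBlocks₂₂] at h22
  -- h12 : of a * fromColumns C₁ᴴ C₂ᴴ + fromColumns B₁ B₂ * fromBlocks D₁ᴴ 0 D₂ᴴ D₃ᴴ = 0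
  rw [mul_fromCols, fromCols_mul_fromBlocks] at h12
  have hA : (Matrix.of fun _ _ : Fin 1 => a) * C₂ᴴ + B₂ * D₃ᴴ = 0 := by
    ext i j
    rw [Subsingleton.elim i 0]
    have := congrFun (congrFun h12 0) (Sum.inr j)
    simpa [fromCols] using this
  rw [fromRows_mul_fromCols, fromBlocks_multiply, ← fromBlocks_one, fromBlocks_add,
    fromBlocks_inj] at h22
  have hB : C₁ * C₂ᴴ + D₂ * D₃ᴴ = 0 := by
    have := h22.2.1
    simpa using this
  -- combine
  have key : (a • D₂) * D₃ᴴ = (C₁ * B₂) * D₃ᴴ := by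
    have h1 : (Matrix.of fun _ _ : Fin 1 => a) * C₂ᴴ = a • C₂ᴴ := by
      ext i j
      rw [Subsingleton.elim i 0]
      simp [Matrix.mul_apply, Fin.sum_univ_one]
    have h2 : a • C₂ᴴ = -(B₂ * D₃ᴴ) := by
      rw [← h1]; linear_combination (norm := noncomm_ring) hA
    have h3 : D₂ * D₃ᴴ = -(C₁ * C₂ᴴ) := by linear_combination (norm := noncomm_ring) hB
    calc (a • D₂) * D₃ᴴ = a • (D₂ * D₃ᴴ) := by rw [Matrix.smul_mul]
    _ = a • (-(C₁ * C₂ᴴ)) := by rw [h3]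
    _ = -(C₁ * (a • C₂ᴴ)) := by rw [Matrix.mul_smul, smul_neg]
    _ = C₁ * (B₂ * D₃ᴴ) := by rw [h2, Matrix.mul_neg, neg_neg]
    _ = (C₁ * B₂) * D₃ᴴ := by rw [Matrix.mul_assoc]
  have hD : IsUnit D₃ᴴ := by
    rw [Matrix.isUnit_iff_isUnit_det, Matrix.det_conjTranspose]
    exact (((Matrix.isUnit_iff_isUnit_det _).1 hD₃).map (starRingEnd ℂ))
  obtain ⟨u, hu⟩ := hD
  have huu : D₃ᴴ * (↑u⁻¹ : Matrix (Fin q) (Fin q) ℂ) = 1 := by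
    rw [← hu]; exact u.mul_inv
  have hfin := congrArg (fun M => M * (↑u⁻¹ : Matrix (Fin q) (Fin q) ℂ)) key
  simp only [Matrix.mul_assoc, huu, Matrix.mul_one] at hfin
  exact hfin
end
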